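/- Let p > 0, α > 0 and K ≥ 1 an integer. For 0 < D ≤ α define p₀(D) = D·(D/α)^{pK}·(D^p + Kα^p − KD^p)^{−1/p} and F(D) = p₀(D)·α^p·D^p·(D^p + Kα^p − KD^p)^{−1} + (1 − p₀(D))·D^p. Then F is differentiable at D = α and F′(α) = p·K·α^{p−1}. Consequently, the slope of the operational rate-distortion function of the K-independent-encodings scheme at zero rate, lim computed as the ratio of the derivative of the rate K·log(α/D) to the derivative of the joint distortion (2/p)·F(D) at D = α, coincides with the slope of Shannon's rate-distortion function at zero rate, i.e., the ratio (−K/α)/( (2/p)·F′(α) ) equals the corresponding ratio (−K/α)/(2Kα^{p−1}) for Shannon's RDF. -/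

import Mathlib

/-- The probability `p₀(D) = D·(D/α)^{pK}·(D^p + Kα^p − KD^p)^{−1/p}` that all `K` outputs of
the parallel generalized-Gaussian test channels are zero. -/
noncomputable def probAllZero (p α : ℝ) (K : ℕ) (D : ℝ) : ℝ :=
  D * (D / α) ^ (p * K) * (D ^ p + K * α ^ p - K * D ^ p) ^ (-(1 / p))

/-- `F(D) = p₀(D)·α^p·D^p·(D^p + Kα^p − KD^p)^{−1} + (1 − p₀(D))·D^p`; the joint `p`-th power
distortion of the select-non-zero estimator is `(2/p)·F(D)`. -/
noncomputable def distortionF (p α : ℝ) (K : ℕ) (D : ℝ) : ℝ :=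
  probAllZero p α K D * (α ^ p * D ^ p * (D ^ p + K * α ^ p - K * D ^ p)⁻¹) +
    (1 - probAllZero p α K D) * D ^ p

/-- STATEMENT 12: `F` is differentiable at `D = α` with `F′(α) = p·K·α^{p−1}`.  Consequently,
the slope of the operational rate-distortion function of the `K`-independent-encodings scheme
at zero rate — the ratio of the derivative of the rate `K·log(α/D)` to the derivative of the
joint distortion `(2/p)·F(D)` at `D = α` — coincides with the slope of Shannon's RDF at zero
rate, i.e. `(−K/α)/((2/p)·F′(α)) = (−K/α)/(2Kα^{p−1})`. -/
theorem genGauss_operational_slope (p α : ℝ) (hp : 0 < p) (hα : 0 < α) (K : ℕ) (hK : 1 ≤ K) :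
    HasDerivAt (distortionF p α K) (p * K * α ^ (p - 1)) α ∧
      (-(K : ℝ) / α) / ((2 / p) * (p * K * α ^ (p - 1)))
        = (-(K : ℝ) / α) / (2 * K * α ^ (p - 1)) := by
  have hα' : α ≠ 0 := hα.ne'
  have hαp : (0:ℝ) < α ^ p := Real.rpow_pos_of_pos hα p
  constructor
  · have hid : HasDerivAt (fun D : ℝ => D) 1 α := hasDerivAt_id α
    have hDp := hid.rpow_const (p := p) (Or.inl hα')
    have hg := (hDp.add_const ((K:ℝ) * α ^ p)).sub (hDp.const_mul (K:ℝ))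
    have hgα : (α ^ p + (K:ℝ) * α ^ p - (K:ℝ) * α ^ p) = α ^ p := by ring
    have hgpos : (0:ℝ) < α ^ p + (K:ℝ) * α ^ p - (K:ℝ) * α ^ p := by rw [hgα]; exact hαp
    have hr := hg.rpow_const (p := -(1/p)) (Or.inl hgpos.ne')
    have hq := (hid.div_const α).rpow_const (p := p * (K:ℝ))
      (Or.inl (by rw [div_self hα']; exact one_ne_zero))
    have hp₀ := (hid.mul hq).mul hr
    have hinv := hg.inv hgpos.ne'
    have hu := ((hasDerivAt_const α ((α:ℝ) ^ p * α ^ p)).mul hinv)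
    have hu2 := ((hDp.const_mul ((α:ℝ) ^ p)).mul hinv)
    have hF := (hp₀.mul hu2).add (((hasDerivAt_const α (1:ℝ)).sub hp₀).mul hDp)
    have hfun : (fun D : ℝ =>
        D * (D / α) ^ (p * (K:ℝ)) *
            (D ^ p + (K:ℝ) * α ^ p - (K:ℝ) * D ^ p) ^ (-(1 / p)) *
          ((α:ℝ) ^ p * D ^ p * (D ^ p + (K:ℝ) * α ^ p - (K:ℝ) * D ^ p)⁻¹) +
        (1 - D * (D / α) ^ (p * (K:ℝ)) *
            (D ^ p + (K:ℝ) * α ^ p - (K:ℝ) * D ^ p) ^ (-(1 / p))) * D ^ p)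
        = distortionF p α K := by
      funext D
      simp [distortionF, probAllZero, mul_assoc]
    rw [← hfun]
    refine hF.congr_deriv ?_
    simp only [Pi.sub_apply, Pi.mul_apply, Pi.inv_apply, div_self hα', Real.one_rpow, hgα, one_mul, mul_one, zero_sub, zero_mul]
    have e1 : ((α:ℝ) ^ p) ^ (-(1 / p)) = α⁻¹ := by
      rw [← Real.rpow_mul hα.le]
      have h : p * -(1 / p) = -1 := by field_simp
      rw [h, Real.rpow_neg_one]
    have e2 : ((α:ℝ) ^ p) ^ (-(1 / p) - 1) = α⁻¹ * (α ^ p)⁻¹ := by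
      rw [Real.rpow_sub hαp, e1, Real.rpow_one, div_eq_mul_inv]
    have e3 : α ^ (p - 1) = α ^ p * α⁻¹ := by
      rw [Real.rpow_sub hα, Real.rpow_one, div_eq_mul_inv]
    rw [e1, e2, e3]
    field_simp
    ring
  · have h2 : (2 / p) * (p * K * α ^ (p - 1)) = 2 * K * α ^ (p - 1) := by
      field_simp
    rw [h2]
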